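/- Let V be a finite set, f : 2^V → ℝ a submodular function with f(∅) = 0, μ ≥ max{0, −f(V)}, and W ⊆ V a set with f(W) = −μ. Let h ≥ 1 and, for each i = 1, …, h, let μ_i satisfy max{0, −f(V)} ≤ μ_i ≤ μ, let σ_i be an ordering of V, let g_i be the greedy vertex of B(f_{μ_i}) with respect to σ_i, and let ḡ_i be the greedy vertex of B(f) with respect to the same ordering σ_i. Let λ ∈ ℝ^h with λ ≥ 0 and ∑_{i=1}^h λ_i = 1, and set v := ∑_{i=1}^h λ_i g_i and y := ∑_{i=1}^h λ_i ḡ_i. Then y ∈ B(f) and f(W) ≤ y⁻(V) + ‖v‖₁/2. -/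

import Mathlib

open Finset

noncomputable section
open scoped Classical

variable {V : Type*} [Fintype V] [DecidableEq V]

/-- A set function `f : 2^V → ℝ` is submodular if
`f(X∩Y) + f(X∪Y) ≤ f(X) + f(Y)` for all `X, Y ⊆ V`. -/
def IsSubmodular (f : Finset V → ℝ) : Prop :=
  ∀ X Y : Finset V, f (X ∩ Y) + f (X ∪ Y) ≤ f X + f Y

/-- The base polytope `B(f)` of a submodular function. -/
def basePolytope (f : Finset V → ℝ) : Set (V → ℝ) :=
  {x | (∀ S : Finset V, ∑ v ∈ S, x v ≤ f S) ∧ (∑ v, x v) = f Finset.univ}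

/-- The `μ`-enlargement `f_μ` of `f`. -/
def muEnlargement (f : Finset V → ℝ) (μ : ℝ) : Finset V → ℝ :=
  fun S => if S = ∅ ∨ S = Finset.univ then 0 else f S + μ

/-- The greedy vertex of `B(g)` associated with the ordering `σ` of `V`:
`x(v) = g({v₁, …, v_i}) - g({v₁, …, v_{i-1}})` where `v = v_i`. -/
noncomputable def greedyVertex (g : Finset V → ℝ)
    (σ : Fin (Fintype.card V) ≃ V) : V → ℝ :=
  fun v =>
    g ((Finset.univ.filter fun k => k ≤ σ.symm v).image σ) -
    g ((Finset.univ.filter fun k => k < σ.symm v).image σ)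



def pfx (σ : Fin (Fintype.card V) ≃ V) (j : ℕ) : Finset V :=
  (Finset.univ.filter fun k : Fin (Fintype.card V) => (k : ℕ) < j).image σ

lemma mem_pfx {σ : Fin (Fintype.card V) ≃ V} {j : ℕ} {w : V} :
    w ∈ pfx σ j ↔ (σ.symm w : ℕ) < j := by
  simp only [pfx, mem_image, mem_filter, mem_univ, true_and]
  constructor
  · rintro ⟨k, hk, rfl⟩; simpa using hk
  · intro hlt; exact ⟨σ.symm w, hlt, σ.apply_symm_apply w⟩

lemma pfx_zero (σ : Fin (Fintype.card V) ≃ V) : pfx σ 0 = ∅ := by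
  ext w; simp [mem_pfx]

lemma pfx_card (σ : Fin (Fintype.card V) ≃ V) : pfx σ (Fintype.card V) = Finset.univ := by
  ext w; simp [mem_pfx, (σ.symm w).isLt]

lemma not_mem_pfx_self (σ : Fin (Fintype.card V) ≃ V) (j : Fin (Fintype.card V)) :
    σ j ∉ pfx σ (j : ℕ) := by
  simp [mem_pfx]

lemma pfx_succ (σ : Fin (Fintype.card V) ≃ V) (j : Fin (Fintype.card V)) :
    pfx σ ((j : ℕ) + 1) = insert (σ j) (pfx σ (j : ℕ)) := by
  ext w
  simp only [mem_pfx, Finset.mem_insert, Nat.lt_succ_iff_lt_or_eq]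
  constructor
  · rintro (hlt | he)
    · exact Or.inr hlt
    · left
      have : σ.symm w = j := Fin.ext he
      rw [← this, σ.apply_symm_apply]
  · rintro (rfl | hlt)
    · right; simp
    · exact Or.inl hlt

lemma greedy_eq (g : Finset V → ℝ) (σ : Fin (Fintype.card V) ≃ V) (w : V) :
    greedyVertex g σ w = g (pfx σ ((σ.symm w : ℕ) + 1)) - g (pfx σ (σ.symm w : ℕ)) := by
  have h1 : (Finset.univ.filter fun k => k ≤ σ.symm w)
      = Finset.univ.filter fun k : Fin (Fintype.card V) => (k : ℕ) < (σ.symm w : ℕ) + 1 := by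
    apply Finset.filter_congr; intro k _
    simp only [Fin.le_def, Nat.lt_succ_iff]
  have h2 : (Finset.univ.filter fun k => k < σ.symm w)
      = Finset.univ.filter fun k : Fin (Fintype.card V) => (k : ℕ) < (σ.symm w : ℕ) := by
    apply Finset.filter_congr; intro k _
    simp only [Fin.lt_def]
  rw [greedyVertex, h1, h2]; rfl

lemma greedy_sum (g : Finset V → ℝ) (σ : Fin (Fintype.card V) ≃ V) :
    ∑ w, greedyVertex g σ w = g Finset.univ - g ∅ := by
  rw [← Equiv.sum_comp σ (greedyVertex g σ)]
  have : ∀ j : Fin (Fintype.card V),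
      greedyVertex g σ (σ j) = g (pfx σ ((j : ℕ) + 1)) - g (pfx σ (j : ℕ)) := by
    intro j; rw [greedy_eq]; simp
  rw [Finset.sum_congr rfl fun j _ => this j]
  rw [Fin.sum_univ_eq_sum_range (fun j => g (pfx σ (j + 1)) - g (pfx σ j))]
  rw [Finset.sum_range_sub (fun j => g (pfx σ j))]
  rw [pfx_zero, pfx_card]

lemma greedy_le (g : Finset V → ℝ) (hg : IsSubmodular g) (hg0 : g ∅ = 0)
    (σ : Fin (Fintype.card V) ≃ V) (S : Finset V) :
    ∑ w ∈ S, greedyVertex g σ w ≤ g S := by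
  have key : ∀ j : ℕ, ∑ w ∈ S ∩ pfx σ j, greedyVertex g σ w ≤ g (S ∩ pfx σ j) := by
    intro j
    induction j with
    | zero => simp [pfx_zero, hg0]
    | succ j ih =>
      by_cases hj : j < Fintype.card V
      · set jj : Fin (Fintype.card V) := ⟨j, hj⟩ with hjj
        have hins : pfx σ (j + 1) = insert (σ jj) (pfx σ j) := pfx_succ σ jj
        by_cases hmem : σ jj ∈ S
        · have h1 : S ∩ pfx σ (j + 1) = insert (σ jj) (S ∩ pfx σ j) := by
            rw [hins]; ext w
            simp only [Finset.mem_inter, Finset.mem_insert]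
            constructor
            · rintro ⟨hS, rfl | hp⟩
              · exact Or.inl rfl
              · exact Or.inr ⟨hS, hp⟩
            · rintro (rfl | ⟨hS, hp⟩)
              · exact ⟨hmem, Or.inl rfl⟩
              · exact ⟨hS, Or.inr hp⟩
          have hnot : σ jj ∉ S ∩ pfx σ j := fun hc =>
            not_mem_pfx_self σ jj (Finset.mem_of_mem_inter_right hc)
          have hx : greedyVertex g σ (σ jj) = g (pfx σ (j + 1)) - g (pfx σ j) := by
            rw [greedy_eq]; simp; rfl
          have hsub := hg (insert (σ jj) (S ∩ pfx σ j)) (pfx σ j)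
          have hXi : insert (σ jj) (S ∩ pfx σ j) ∩ pfx σ j = S ∩ pfx σ j := by
            rw [Finset.insert_inter_of_notMem (not_mem_pfx_self σ jj),
              Finset.inter_assoc, Finset.inter_self]
          have hXu : insert (σ jj) (S ∩ pfx σ j) ∪ pfx σ j = pfx σ (j + 1) := by
            rw [Finset.insert_union, Finset.union_eq_right.mpr Finset.inter_subset_right, hins]
          rw [hXi, hXu] at hsub
          rw [h1, Finset.sum_insert hnot, hx]
          linarith
        · have h1 : S ∩ pfx σ (j + 1) = S ∩ pfx σ j := by
            rw [hins]; ext w; simp only [Finset.mem_inter, Finset.mem_insert]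
            constructor
            · rintro ⟨hS, rfl | hp⟩
              · exact absurd hS hmem
              · exact ⟨hS, hp⟩
            · rintro ⟨hS, hp⟩; exact ⟨hS, Or.inr hp⟩
          rw [h1]; exact ih
      · have h1 : pfx σ (j + 1) = pfx σ j := by
          ext w; simp only [mem_pfx]
          have := (σ.symm w).isLt; omega
        rw [h1]; exact ih
  have := key (Fintype.card V)
  simpa [pfx_card] using this


lemma d_bound (f : Finset V → ℝ) (h0 : f ∅ = 0) (ν : ℝ)
    (hν : max 0 (-(f Finset.univ)) ≤ ν) (σ : Fin (Fintype.card V) ≃ V) :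
    -ν ≤ ∑ w, min (greedyVertex f σ w - greedyVertex (muEnlargement f ν) σ w) 0 := by
  have hν0 : 0 ≤ ν := le_trans (le_max_left _ _) hν
  have hνf : -(f Finset.univ) ≤ ν := le_trans (le_max_right _ _) hν
  have hAmem : ∀ w : V, w ∈ (Finset.univ.filter fun k => k ≤ σ.symm w).image σ := fun w =>
    Finset.mem_image.mpr ⟨σ.symm w, by simp, σ.apply_symm_apply w⟩
  have hBnot : ∀ w : V, w ∉ (Finset.univ.filter fun k => k < σ.symm w).image σ := by
    intro w hw
    rcases Finset.mem_image.mp hw with ⟨k, hk, hkw⟩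
    have hlt : k < σ.symm w := (Finset.mem_filter.mp hk).2
    rw [← hkw, Equiv.symm_apply_apply] at hlt
    exact lt_irrefl _ hlt
  have hDval : ∀ w : V, greedyVertex f σ w - greedyVertex (muEnlargement f ν) σ w =
      (if (Finset.univ.filter fun k => k ≤ σ.symm w).image σ = Finset.univ
        then f Finset.univ else -ν)
      + (if (Finset.univ.filter fun k => k < σ.symm w).image σ = (∅ : Finset V)
        then 0 else ν) := by
    intro w
    set A := (Finset.univ.filter fun k => k ≤ σ.symm w).image σ with hAd
    set B := (Finset.univ.filter fun k => k < σ.symm w).image σ with hBd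
    have hAne : A ≠ ∅ := Finset.ne_empty_of_mem (hAmem w)
    have hBneu : B ≠ Finset.univ := by
      intro hc
      have hwu := Finset.mem_univ w
      rw [← hc] at hwu
      exact hBnot w hwu
    have hmA : muEnlargement f ν A = if A = Finset.univ then 0 else f A + ν := by
      simp [muEnlargement, hAne]
    have hmB : muEnlargement f ν B = if B = (∅ : Finset V) then 0 else f B + ν := by
      simp [muEnlargement, hBneu]
    show (f A - f B) - (muEnlargement f ν A - muEnlargement f ν B) = _
    rw [hmA, hmB]
    by_cases hAu : A = Finset.univ <;> by_cases hBe : B = (∅ : Finset V) <;>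
      simp [hAu, hBe, h0] <;> ring
  have hptwise : ∀ w : V,
      -ν ≤ min (greedyVertex f σ w - greedyVertex (muEnlargement f ν) σ w) 0 := by
    intro w
    apply le_min _ (by linarith)
    rw [hDval w]
    have h1 : -ν ≤ (if (Finset.univ.filter fun k => k ≤ σ.symm w).image σ = Finset.univ
        then f Finset.univ else -ν) := by
      split <;> linarith
    have h2 : (0:ℝ) ≤ (if (Finset.univ.filter fun k => k < σ.symm w).image σ = (∅ : Finset V)
        then 0 else ν) := by
      split <;> linarith
    linarith
  have hzero : ∀ w : V, (Finset.univ.filter fun k => k < σ.symm w).image σ ≠ (∅ : Finset V) →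
      min (greedyVertex f σ w - greedyVertex (muEnlargement f ν) σ w) 0 = 0 := by
    intro w hBne
    apply min_eq_right
    rw [hDval w, if_neg hBne]
    have h1 : (0:ℝ) - ν ≤ (if (Finset.univ.filter fun k => k ≤ σ.symm w).image σ = Finset.univ
        then f Finset.univ else -ν) := by
      split <;> linarith
    linarith
  rcases isEmpty_or_nonempty V with hV | hV
  · rw [Finset.univ_eq_empty, Finset.sum_empty]; linarith
  · have hcard : 0 < Fintype.card V := Fintype.card_pos
    set w0 := σ ⟨0, hcard⟩ with hw0
    have heq := Finset.add_sum_erase Finset.univ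
      (fun w => min (greedyVertex f σ w - greedyVertex (muEnlargement f ν) σ w) 0)
      (Finset.mem_univ w0)
    have hrest : ∀ w ∈ Finset.univ.erase w0,
        min (greedyVertex f σ w - greedyVertex (muEnlargement f ν) σ w) 0 = 0 := by
      intro w hw
      apply hzero w
      have hne : σ.symm w ≠ ⟨0, hcard⟩ := by
        intro hc
        exact Finset.ne_of_mem_erase hw (by rw [← σ.apply_symm_apply w, hc])
      have h0lt : (⟨0, hcard⟩ : Fin (Fintype.card V)) < σ.symm w := by
        rw [Fin.lt_def]
        exact Nat.pos_of_ne_zero fun hc => hne (Fin.ext hc)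
      exact Finset.ne_empty_of_mem (Finset.mem_image.mpr
        ⟨⟨0, hcard⟩, Finset.mem_filter.mpr ⟨Finset.mem_univ _, h0lt⟩, rfl⟩)
    rw [← heq, Finset.sum_eq_zero hrest, add_zero]
    exact hptwise w0

/-- Pulling back a convex combination of extreme bases of enlargements
`B(f_{μ_i})` to a point `y ∈ B(f)` certifying `f(W) ≤ y⁻(V) + ‖v‖₁/2`. -/
theorem slide_back (f : Finset V → ℝ) (hf : IsSubmodular f) (h0 : f ∅ = 0)
    (μ : ℝ) (hμ : max 0 (-(f Finset.univ)) ≤ μ)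
    (W : Finset V) (hW : f W = -μ)
    (h : ℕ) (hh : 1 ≤ h)
    (μs : Fin h → ℝ)
    (hμs : ∀ i : Fin h, max 0 (-(f Finset.univ)) ≤ μs i ∧ μs i ≤ μ)
    (σ : Fin h → (Fin (Fintype.card V) ≃ V))
    (lam : Fin h → ℝ) (hlam : ∀ i, 0 ≤ lam i) (hsum : (∑ i, lam i) = 1) :
    (fun v => ∑ i, lam i * greedyVertex f (σ i) v) ∈ basePolytope f ∧
    f W ≤ (∑ v, min (∑ i, lam i * greedyVertex f (σ i) v) 0) +
      (∑ v, |∑ i, lam i * greedyVertex (muEnlargement f (μs i)) (σ i) v|) / 2 := by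
  have hμ0 : 0 ≤ μ := le_trans (le_max_left _ _) hμ
  have hmem : (fun v => ∑ i, lam i * greedyVertex f (σ i) v) ∈ basePolytope f := by
    constructor
    · intro S
      have hswap : ∑ w ∈ S, ∑ i, lam i * greedyVertex f (σ i) w
          = ∑ i, lam i * ∑ w ∈ S, greedyVertex f (σ i) w := by
        rw [Finset.sum_comm]
        exact Finset.sum_congr rfl fun i _ => (Finset.mul_sum _ _ _).symm
      rw [hswap]
      calc ∑ i, lam i * ∑ w ∈ S, greedyVertex f (σ i) w
          ≤ ∑ i, lam i * f S := Finset.sum_le_sum fun i _ =>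
            mul_le_mul_of_nonneg_left (greedy_le f hf h0 (σ i) S) (hlam i)
        _ = f S := by rw [← Finset.sum_mul, hsum, one_mul]
    · have hswap : ∑ w, ∑ i, lam i * greedyVertex f (σ i) w
          = ∑ i, lam i * ∑ w, greedyVertex f (σ i) w := by
        rw [Finset.sum_comm]
        exact Finset.sum_congr rfl fun i _ => (Finset.mul_sum _ _ _).symm
      rw [hswap]
      have hgs : ∀ i : Fin h, ∑ w, greedyVertex f (σ i) w = f Finset.univ := by
        intro i; rw [greedy_sum, h0, sub_zero]
      rw [Finset.sum_congr rfl fun i _ => by rw [hgs i], ← Finset.sum_mul, hsum, one_mul]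
  refine ⟨hmem, ?_⟩
  rw [hW]
  have hvV : ∑ w, ∑ i, lam i * greedyVertex (muEnlargement f (μs i)) (σ i) w = 0 := by
    rw [Finset.sum_comm]
    apply Finset.sum_eq_zero
    intro i _
    rw [← Finset.mul_sum, greedy_sum]
    simp [muEnlargement]
  have hminv : ∑ w, min (∑ i, lam i * greedyVertex (muEnlargement f (μs i)) (σ i) w) 0
      = -((∑ w, |∑ i, lam i * greedyVertex (muEnlargement f (μs i)) (σ i) w|) / 2) := by
    have habs : ∀ a : ℝ, min a 0 = (a - |a|) / 2 := by
      intro a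
      rcases le_or_gt 0 a with ha | ha
      · rw [min_eq_right ha, abs_of_nonneg ha]; ring
      · rw [min_eq_left ha.le, abs_of_neg ha]; ring
    rw [Finset.sum_congr rfl fun w _ => habs _, ← Finset.sum_div, Finset.sum_sub_distrib, hvV]
    ring
  have hstep : ∀ w : V,
      min (∑ i, lam i * greedyVertex (muEnlargement f (μs i)) (σ i) w) 0
      + ∑ i, lam i * min (greedyVertex f (σ i) w
          - greedyVertex (muEnlargement f (μs i)) (σ i) w) 0
      ≤ min (∑ i, lam i * greedyVertex f (σ i) w) 0 := by
    intro w
    apply le_min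
    · have h1 : min (∑ i, lam i * greedyVertex (muEnlargement f (μs i)) (σ i) w) 0
          ≤ ∑ i, lam i * greedyVertex (muEnlargement f (μs i)) (σ i) w := min_le_left _ _
      have h2 : ∑ i, lam i * min (greedyVertex f (σ i) w
            - greedyVertex (muEnlargement f (μs i)) (σ i) w) 0
          ≤ ∑ i, lam i * (greedyVertex f (σ i) w
            - greedyVertex (muEnlargement f (μs i)) (σ i) w) :=
        Finset.sum_le_sum fun i _ => mul_le_mul_of_nonneg_left (min_le_left _ _) (hlam i)
      have h3 : ∑ i, lam i * greedyVertex (muEnlargement f (μs i)) (σ i) w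
          + ∑ i, lam i * (greedyVertex f (σ i) w
            - greedyVertex (muEnlargement f (μs i)) (σ i) w)
          = ∑ i, lam i * greedyVertex f (σ i) w := by
        rw [← Finset.sum_add_distrib]
        exact Finset.sum_congr rfl fun i _ => by ring
      linarith
    · have h1 : min (∑ i, lam i * greedyVertex (muEnlargement f (μs i)) (σ i) w) 0
          ≤ 0 := min_le_right _ _
      have h2 : ∑ i, lam i * min (greedyVertex f (σ i) w
            - greedyVertex (muEnlargement f (μs i)) (σ i) w) 0 ≤ 0 :=
        Finset.sum_nonpos fun i _ =>
          mul_nonpos_of_nonneg_of_nonpos (hlam i) (min_le_right _ _)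
      linarith
  have hdiff : -μ ≤ ∑ w, ∑ i, lam i * min (greedyVertex f (σ i) w
      - greedyVertex (muEnlargement f (μs i)) (σ i) w) 0 := by
    rw [Finset.sum_comm]
    have hbnd : ∀ i : Fin h, lam i * (-μ) ≤ ∑ w, lam i * min (greedyVertex f (σ i) w
        - greedyVertex (muEnlargement f (μs i)) (σ i) w) 0 := by
      intro i
      rw [← Finset.mul_sum]
      have hb := d_bound f h0 (μs i) (hμs i).1 (σ i)
      have hb2 : lam i * (-(μs i)) ≤ lam i * ∑ w, min (greedyVertex f (σ i) w
          - greedyVertex (muEnlargement f (μs i)) (σ i) w) 0 :=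
        mul_le_mul_of_nonneg_left hb (hlam i)
      have hb3 : lam i * (-μ) ≤ lam i * (-(μs i)) :=
        mul_le_mul_of_nonneg_left (neg_le_neg (hμs i).2) (hlam i)
      linarith
    calc -μ = ∑ i, lam i * (-μ) := by rw [← Finset.sum_mul, hsum]; ring
      _ ≤ _ := Finset.sum_le_sum fun i _ => hbnd i
  have hcomb : ∑ w, (min (∑ i, lam i * greedyVertex (muEnlargement f (μs i)) (σ i) w) 0
      + ∑ i, lam i * min (greedyVertex f (σ i) w
        - greedyVertex (muEnlargement f (μs i)) (σ i) w) 0)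
      ≤ ∑ w, min (∑ i, lam i * greedyVertex f (σ i) w) 0 :=
    Finset.sum_le_sum fun w _ => hstep w
  rw [Finset.sum_add_distrib, hminv] at hcomb
  linarith
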